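/- Let G be a finite simple graph with n vertices and m edges. Then NK(G^{-++}) = (n-1)^n · Π1*(G). -/

import Mathlib

open Finset

variable {V : Type*}

/-- The Narumi–Katayama index: the product of the degrees of all vertices. -/
def NK {W : Type*} [Fintype W] (H : SimpleGraph W) [DecidableRel H.Adj] : ℕ :=
  ∏ v, H.degree v

/-- The first Zagreb index: the sum of the squares of the degrees. -/
def M1 [Fintype V] (G : SimpleGraph V) [DecidableRel G.Adj] : ℕ :=
  ∑ v, (G.degree v) ^ 2

/-- The multiplicative sum Zagreb index: the product over the edges of `G` of the
sum of the degrees of the two endpoints. -/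
def Pi1Star [Fintype V] [DecidableEq V] (G : SimpleGraph V) [DecidableRel G.Adj] : ℕ :=
  ∏ e ∈ G.edgeFinset,
    Sym2.lift ⟨fun u v => G.degree u + G.degree v, fun u v => by simp [Nat.add_comm]⟩ e

/-- A generic transformation graph on the vertex set `V(G) ∪ E(G)`, built from a
symmetric irreflexive relation `Rvv` between vertices, a symmetric irreflexive relation
`Ree` between edges, and an incidence relation `Rve` between vertices and edges. -/
def transGraph (G : SimpleGraph V) (Rvv : V → V → Prop) (Ree : Sym2 V → Sym2 V → Prop)
    (Rve : V → Sym2 V → Prop)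
    (hvv : Symmetric Rvv) (hvv' : Irreflexive Rvv)
    (hee : Symmetric Ree) (hee' : Irreflexive Ree) :
    SimpleGraph (V ⊕ G.edgeSet) where
  Adj a b :=
    match a, b with
    | Sum.inl u, Sum.inl v => Rvv u v
    | Sum.inr e, Sum.inr f => Ree e.1 f.1
    | Sum.inl u, Sum.inr e => Rve u e.1
    | Sum.inr e, Sum.inl u => Rve u e.1
  symm := by
    refine ⟨?_⟩
    rintro (u | e) (v | f) h
    · exact hvv h
    · exact h
    · exact h
    · exact hee h
  loopless := by
    refine ⟨?_⟩
    rintro (u | e) h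
    · exact hvv' u h
    · exact hee' e.1 h

instance transGraph.instDecidableAdj (G : SimpleGraph V) (Rvv : V → V → Prop)
    (Ree : Sym2 V → Sym2 V → Prop) (Rve : V → Sym2 V → Prop)
    (h1 : Symmetric Rvv) (h2 : Irreflexive Rvv) (h3 : Symmetric Ree) (h4 : Irreflexive Ree)
    [DecidableRel Rvv] [DecidableRel Ree] [∀ u e, Decidable (Rve u e)] :
    DecidableRel (transGraph G Rvv Ree Rve h1 h2 h3 h4).Adj := fun a b =>
  match a, b with
  | Sum.inl u, Sum.inl v => inferInstanceAs (Decidable (Rvv u v))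
  | Sum.inr e, Sum.inr f => inferInstanceAs (Decidable (Ree e.1 f.1))
  | Sum.inl u, Sum.inr e => inferInstanceAs (Decidable (Rve u e.1))
  | Sum.inr e, Sum.inl u => inferInstanceAs (Decidable (Rve u e.1))

/-- Two edges (as elements of `Sym2 V`) are adjacent: distinct and sharing an endpoint. -/
abbrev shareRel : Sym2 V → Sym2 V → Prop := fun e f => e ≠ f ∧ ∃ w, w ∈ e ∧ w ∈ f

lemma shareRel_symm : Symmetric (shareRel (V := V)) :=
  fun _ _ h => ⟨h.1.symm, h.2.imp fun _ hw => ⟨hw.2, hw.1⟩⟩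

lemma shareRel_irrefl : Irreflexive (shareRel (V := V)) := fun _ h => h.1 rfl

/-- Two edges are "non-adjacent": distinct and sharing no endpoint. -/
abbrev coshareRel : Sym2 V → Sym2 V → Prop := fun e f => e ≠ f ∧ ∀ w, w ∈ e → w ∉ f

lemma coshareRel_symm : Symmetric (coshareRel (V := V)) :=
  fun _ _ h => ⟨h.1.symm, fun w hf he => h.2 w he hf⟩

lemma coshareRel_irrefl : Irreflexive (coshareRel (V := V)) := fun _ h => h.1 rfl

/-- Non-adjacency of distinct vertices. -/
abbrev coAdj (G : SimpleGraph V) : V → V → Prop := fun u v => u ≠ v ∧ ¬ G.Adj u v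

lemma coAdj_symm (G : SimpleGraph V) : Symmetric (coAdj G) :=
  fun _ _ h => ⟨h.1.symm, fun ha => h.2 ha.symm⟩

lemma coAdj_irrefl (G : SimpleGraph V) : Irreflexive (coAdj G) := fun _ h => h.1 rfl

variable [Fintype V] [DecidableEq V]

/-- The total transformation graph `G^{-++}`. -/
abbrev Gmpp (G : SimpleGraph V) [DecidableRel G.Adj] : SimpleGraph (V ⊕ G.edgeSet) :=
  transGraph G (coAdj G) shareRel (fun u e => u ∈ e)
    (coAdj_symm G) (coAdj_irrefl G) shareRel_symm shareRel_irrefl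


-- Auxiliary lemmas

lemma card_split {α β : Type*} [Fintype α] [Fintype β] (p : α ⊕ β → Prop) [DecidablePred p] :
    Fintype.card {x // p x} =
      Fintype.card {a // p (Sum.inl a)} + Fintype.card {b // p (Sum.inr b)} := by
  rw [Fintype.card_congr (Equiv.subtypeSum (p := p)), Fintype.card_sum]

lemma degree_eq_card_subtype {W : Type*} [Fintype W] (H : SimpleGraph W) [DecidableRel H.Adj]
    (x : W) : H.degree x = Fintype.card {y // H.Adj x y} := by
  rw [SimpleGraph.degree, SimpleGraph.neighborFinset_eq_filter, ← Fintype.card_subtype]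

lemma card_incident (G : SimpleGraph V) [DecidableRel G.Adj] (u : V) :
    Fintype.card {e : G.edgeSet // u ∈ e.1} = G.degree u := by
  rw [← SimpleGraph.card_incidenceSet_eq_degree]
  apply Fintype.card_congr
  exact (Equiv.subtypeSubtypeEquivSubtypeInter (· ∈ G.edgeSet) (u ∈ ·)).trans
    (Equiv.subtypeEquivRight (fun e => by simp [SimpleGraph.incidenceSet]))

lemma degree_inl (G : SimpleGraph V) [DecidableRel G.Adj] (u : V) :
    (Gmpp G).degree (Sum.inl u) = Fintype.card V - 1 := by
  classical
  rw [degree_eq_card_subtype, card_split]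
  have h1 : Fintype.card {v // (Gmpp G).Adj (Sum.inl u) (Sum.inl v)} =
      Fintype.card {v // coAdj G u v} :=
    Fintype.card_congr (Equiv.subtypeEquivRight fun v => Iff.rfl)
  have h2 : Fintype.card {e : G.edgeSet // (Gmpp G).Adj (Sum.inl u) (Sum.inr e)} =
      Fintype.card {e : G.edgeSet // u ∈ e.1} :=
    Fintype.card_congr (Equiv.subtypeEquivRight fun e => Iff.rfl)
  rw [h1, h2, card_incident]
  have hunion : (univ.filter (fun v => coAdj G u v)) ∪ (univ.filter (G.Adj u)) = univ.erase u := by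
    ext v
    simp only [Finset.mem_union, Finset.mem_filter, Finset.mem_univ, true_and,
      Finset.mem_erase, and_true]
    constructor
    · rintro (⟨h, _⟩ | h)
      · exact h.symm
      · exact h.ne'
    · intro hv
      by_cases h : G.Adj u v
      · exact Or.inr h
      · exact Or.inl ⟨hv.symm, h⟩
  have hdisj : Disjoint (univ.filter (fun v => coAdj G u v)) (univ.filter (G.Adj u)) := by
    rw [Finset.disjoint_left]
    intro v hv hv'
    exact (Finset.mem_filter.mp hv).2.2 (Finset.mem_filter.mp hv').2
  rw [Fintype.card_subtype, SimpleGraph.degree, SimpleGraph.neighborFinset_eq_filter,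
    ← Finset.card_union_of_disjoint hdisj, hunion,
    Finset.card_erase_of_mem (Finset.mem_univ u), Finset.card_univ]

lemma degree_inr (G : SimpleGraph V) [DecidableRel G.Adj] (e : G.edgeSet) :
    (Gmpp G).degree (Sum.inr e) =
      Sym2.lift ⟨fun u v => G.degree u + G.degree v, fun u v => by simp [Nat.add_comm]⟩ e.1 := by
  classical
  obtain ⟨e, he⟩ := e
  revert he
  induction e using Sym2.ind with
  | _ a b =>
    intro hab
    rw [SimpleGraph.mem_edgeSet] at hab
    rw [degree_eq_card_subtype, card_split]
    simp only [Sym2.lift_mk]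
    have h1 : Fintype.card {v // (Gmpp G).Adj (Sum.inr ⟨s(a,b), hab⟩) (Sum.inl v)} =
        Fintype.card {v // v ∈ (s(a, b) : Sym2 V)} :=
      Fintype.card_congr (Equiv.subtypeEquivRight fun v => Iff.rfl)
    have h2 : Fintype.card {f : G.edgeSet // (Gmpp G).Adj (Sum.inr ⟨s(a,b), hab⟩) (Sum.inr f)} =
        Fintype.card {f : G.edgeSet // shareRel (s(a, b) : Sym2 V) f.1} :=
      Fintype.card_congr (Equiv.subtypeEquivRight fun f => Iff.rfl)
    rw [h1, h2]
    have hmem2 : Fintype.card {v // v ∈ (s(a, b) : Sym2 V)} = 2 := by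
      rw [Fintype.card_subtype]
      have : univ.filter (fun v => v ∈ (s(a, b) : Sym2 V)) = {a, b} := by
        ext v; simp [Sym2.mem_iff]
      rw [this, Finset.card_insert_of_notMem (by simpa using hab.ne), Finset.card_singleton]
    have hshare : Fintype.card {f : G.edgeSet // shareRel (s(a, b) : Sym2 V) f.1} + 2 =
        G.degree a + G.degree b := by
      have hcard : Fintype.card {f : G.edgeSet // shareRel (s(a, b) : Sym2 V) f.1} =
          ((G.incidenceFinset a ∪ G.incidenceFinset b).erase s(a, b)).card := by
        rw [Fintype.card_congr
          ((Equiv.subtypeSubtypeEquivSubtypeInter (· ∈ G.edgeSet)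
            (shareRel (s(a, b) : Sym2 V))))]
        apply Fintype.card_of_subtype
        intro f
        simp only [Finset.mem_erase, Finset.mem_union, SimpleGraph.mem_incidenceFinset,
          SimpleGraph.incidenceSet, Set.mem_setOf_eq, Set.mem_sep_iff, shareRel,
          Sym2.mem_iff, ne_eq]
        constructor
        · rintro ⟨hne, (⟨hE, ha⟩ | ⟨hE, hb⟩)⟩
          · exact ⟨hE, fun h => hne h.symm, a, Or.inl rfl, ha⟩
          · exact ⟨hE, fun h => hne h.symm, b, Or.inr rfl, hb⟩
        · rintro ⟨hE, hne, w, (rfl | rfl), hw⟩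
          · exact ⟨fun h => hne h.symm, Or.inl ⟨hE, hw⟩⟩
          · exact ⟨fun h => hne h.symm, Or.inr ⟨hE, hw⟩⟩
      have hmem : s(a, b) ∈ G.incidenceFinset a ∪ G.incidenceFinset b := by
        apply Finset.mem_union_left
        rw [SimpleGraph.mem_incidenceFinset, SimpleGraph.mem_incidenceSet]
        exact hab
      have herase := Finset.card_erase_add_one hmem
      have hinter : G.incidenceFinset a ∩ G.incidenceFinset b = {s(a, b)} := by
        ext f
        simp only [Finset.mem_inter, SimpleGraph.mem_incidenceFinset,
          SimpleGraph.incidenceSet, Set.mem_sep_iff, Finset.mem_singleton]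
        constructor
        · rintro ⟨⟨hE, ha⟩, ⟨_, hb⟩⟩
          exact (Sym2.mem_and_mem_iff hab.ne).mp ⟨ha, hb⟩
        · rintro rfl
          refine ⟨⟨hab, ?_⟩, ⟨hab, ?_⟩⟩ <;> simp
      have hie := Finset.card_union_add_card_inter (G.incidenceFinset a) (G.incidenceFinset b)
      rw [hinter, Finset.card_singleton, SimpleGraph.card_incidenceFinset_eq_degree,
        SimpleGraph.card_incidenceFinset_eq_degree] at hie
      omega
    omega


theorem stmt_13 (G : SimpleGraph V) [DecidableRel G.Adj] :
    NK (Gmpp G) = (Fintype.card V - 1) ^ Fintype.card V * Pi1Star G := by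
  classical
  unfold NK Pi1Star
  rw [Fintype.prod_sum_type]
  simp only [degree_inl, degree_inr]
  rw [Finset.prod_const, Finset.card_univ,
    Finset.prod_subtype G.edgeFinset (fun e => SimpleGraph.mem_edgeFinset)]
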